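/- Define the integer sequence x_0 = 11427, x_1 = 2984191388685, x_{k+2} = 261152656*x_{k+1} - x_k. Then the sequence (x_k) is strictly increasing; in particular the equation x^2 - 343*y^2 = 2 has infinitely many solutions in positive integers. -/
import Mathlib

def yseq : ℕ → ℤ
  | 0 => 617
  | 1 => 161131189369
  | (k+2) => 261152656 * yseq (k+1) - yseq k

theorem stmt_11 (x : ℕ → ℤ)
    (hx0 : x 0 = 11427) (hx1 : x 1 = 2984191388685)
    (hxr : ∀ k, x (k + 2) = 261152656 * x (k + 1) - x k) :
    StrictMono x ∧
    {p : ℤ × ℤ | 0 < p.1 ∧ 0 < p.2 ∧ p.1 ^ 2 - 343 * p.2 ^ 2 = 2}.Infinite := by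
  have hyr : ∀ k, yseq (k + 2) = 261152656 * yseq (k + 1) - yseq k := fun k => rfl
  -- positivity and strict increase for x
  have hxstep : ∀ k, 0 < x k ∧ x k < x (k + 1) := by
    intro k
    induction k with
    | zero => rw [hx0, hx1]; norm_num
    | succ n ih =>
      obtain ⟨h1, h2⟩ := ih
      refine ⟨h1.trans h2, ?_⟩
      rw [hxr n]; nlinarith
  have hmono : StrictMono x := strictMono_nat_of_lt_succ fun n => (hxstep n).2
  refine ⟨hmono, ?_⟩
  -- positivity for y
  have hystep : ∀ k, 0 < yseq k ∧ yseq k < yseq (k + 1) := by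
    intro k
    induction k with
    | zero => show (0:ℤ) < 617 ∧ (617:ℤ) < 161131189369; norm_num
    | succ n ih =>
      obtain ⟨h1, h2⟩ := ih
      refine ⟨h1.trans h2, ?_⟩
      rw [hyr n]; nlinarith
  -- Pell invariant
  have hinv : ∀ k, (x k ^ 2 - 343 * yseq k ^ 2 = 2 ∧ x (k+1) ^ 2 - 343 * yseq (k+1) ^ 2 = 2
      ∧ x k * x (k+1) - 343 * (yseq k * yseq (k+1)) = 261152656) := by
    intro k
    induction k with
    | zero =>
      rw [hx0, hx1]
      refine ⟨by norm_num [show yseq 0 = 617 from rfl], by norm_num [show yseq 1 = 161131189369 from rfl], ?_⟩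
      norm_num [show yseq 0 = 617 from rfl, show yseq 1 = 161131189369 from rfl]
    | succ n ih =>
      obtain ⟨e0, e1, c⟩ := ih
      refine ⟨e1, ?_, ?_⟩
      · rw [hxr n, hyr n]
        linear_combination (261152656:ℤ)^2 * e1 - 2 * 261152656 * c + e0
      · rw [hxr n, hyr n]
        linear_combination (261152656:ℤ) * e1 - c
  apply Set.infinite_of_injective_forall_mem
    (f := fun k : ℕ => ((x k, yseq k) : ℤ × ℤ)) ?_ ?_
  · intro a b hab
    exact hmono.injective (congrArg Prod.fst hab)
  · intro k
    exact ⟨(hxstep k).1, (hystep k).1, (hinv k).1⟩
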